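/- Let G be a group acting on a set X such that every orbit is infinite. Then for any finite subsets A and B of X, there exists g ∈ G such that g(A) ∩ B = ∅. -/

import Mathlib

open Pointwise

/-- If every orbit of a group action is infinite, any finite set can be moved
off any other finite set. -/
theorem stmt1 {G X : Type*} [Group G] [MulAction G X]
    (horb : ∀ x : X, (MulAction.orbit G x).Infinite)
    (A B : Set X) (hA : A.Finite) (hB : B.Finite) :
    ∃ g : G, (fun x => g • x) '' A ∩ B = ∅ := by
  classical
  by_contra h
  push_neg at h
  -- index set: pairs (a,b) ∈ A × B with b in the orbit of a
  set s : Finset (X × X) :=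
    (hA.toFinset ×ˢ hB.toFinset).filter (fun p => p.2 ∈ MulAction.orbit G p.1) with hs
  have hg : ∀ p ∈ s, ∃ g : G, g • p.1 = p.2 := by
    intro p hp
    have := (Finset.mem_filter.mp hp).2
    exact this
  choose! g₀ hg₀ using hg
  have hcovers : ⋃ p ∈ s, g₀ p • ((MulAction.stabilizer G p.1 : Subgroup G) : Set G)
      = (Set.univ : Set G) := by
    ext g
    simp only [Set.mem_iUnion, Set.mem_univ, iff_true]
    obtain ⟨y, hy⟩ := h g
    obtain ⟨⟨a, haA, rfl⟩, hyB⟩ := hy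
    refine ⟨(a, g • a), ?_, ?_⟩
    · refine Finset.mem_filter.mpr ⟨Finset.mem_product.mpr ⟨?_, ?_⟩, ⟨g, rfl⟩⟩
      · exact hA.mem_toFinset.mpr haA
      · exact hB.mem_toFinset.mpr hyB
    · have hspec : g₀ (a, g • a) • a = g • a :=
        hg₀ (a, g • a) (Finset.mem_filter.mpr
          ⟨Finset.mem_product.mpr ⟨hA.mem_toFinset.mpr haA, hB.mem_toFinset.mpr hyB⟩,
            ⟨g, rfl⟩⟩)
      rw [Set.mem_smul_set_iff_inv_smul_mem]
      simp only [SetLike.mem_coe, MulAction.mem_stabilizer_iff, mul_smul]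
      rw [smul_eq_mul, mul_smul]
      exact inv_smul_eq_iff.mpr hspec.symm
  obtain ⟨p, hp, hfi⟩ := Subgroup.exists_finiteIndex_of_leftCoset_cover hcovers
  have : Finite (G ⧸ MulAction.stabilizer G p.1) :=
    by haveI := hfi; exact Subgroup.finite_quotient_of_finiteIndex
  have : (MulAction.orbit G p.1).Finite := by
    have : Finite (MulAction.orbit G p.1) :=
      Finite.of_equiv _ (MulAction.orbitEquivQuotientStabilizer G p.1).symm
    exact Set.finite_coe_iff.mp this
  exact absurd this (horb p.1)
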